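/- Under hypothesis (H1), the following are equivalent: (i) φ_{A,k} is continuous on its domain ℝk + A and this domain is open; (ii) A - (0,∞)·k ⊆ int A; (iii) bd A - (0,∞)·k ⊆ int A; (iv) for every t ∈ ℝ, {y : φ_{A,k}(y) < t} = tk + int A; (v) for every t ∈ ℝ, {y : φ_{A,k}(y) = t} = tk + bd A. -/

import Mathlib

open Set Pointwise

noncomputable def phiF {Y : Type*} [AddCommGroup Y] [Module ℝ Y] (A : Set Y) (k : Y) (y : Y) : EReal :=
  sInf ((fun t : ℝ => (t : EReal)) '' {t : ℝ | y - t • k ∈ A})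

def recCone {Y : Type*} [AddCommGroup Y] [Module ℝ Y] (A : Set Y) : Set Y :=
  {u | ∀ a ∈ A, ∀ t : ℝ, 0 ≤ t → a + t • u ∈ A}

def algInterior {Y : Type*} [AddCommGroup Y] [Module ℝ Y] (C : Set Y) : Set Y :=
  {x ∈ C | ∀ y : Y, ∃ ε : ℝ, 0 < ε ∧ ∀ t : ℝ, 0 ≤ t → t ≤ ε → x + t • y ∈ C}

lemma phiF_lt {Y : Type*} [AddCommGroup Y] [Module ℝ Y] {A : Set Y} {k : Y} {y : Y} {c : EReal} :
    phiF A k y < c ↔ ∃ s : ℝ, (s : EReal) < c ∧ y - s • k ∈ A := by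
  rw [phiF, sInf_lt_iff]
  constructor
  · rintro ⟨_, ⟨s, hs, rfl⟩, hlt⟩; exact ⟨s, hlt, hs⟩
  · rintro ⟨s, hlt, hs⟩; exact ⟨_, ⟨s, hs, rfl⟩, hlt⟩

lemma phiF_le {Y : Type*} [AddCommGroup Y] [Module ℝ Y] [TopologicalSpace Y]
    [IsTopologicalAddGroup Y] [ContinuousSMul ℝ Y]
    {A : Set Y} (hAc : IsClosed A) {k : Y}
    (hrec : ∀ a ∈ A, ∀ t : ℝ, 0 ≤ t → a - t • k ∈ A) (y : Y) (t : ℝ) :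
    phiF A k y ≤ (t : EReal) ↔ y - t • k ∈ A := by
  constructor
  · intro h
    have hS : IsClosed {s : ℝ | y - s • k ∈ A} :=
      hAc.preimage (continuous_const.sub (continuous_id.smul continuous_const))
    have hsub : Ioi t ⊆ {s : ℝ | y - s • k ∈ A} := by
      intro s hs
      have hts : (t : EReal) < (s : EReal) := by exact_mod_cast hs
      obtain ⟨s', hlt, hs'⟩ := phiF_lt.1 (lt_of_le_of_lt h hts)
      have hle : s' ≤ s := le_of_lt (by exact_mod_cast hlt)
      have h1 := hrec _ hs' (s - s') (by linarith)
      have heq : y - s' • k - (s - s') • k = y - s • k := by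
        rw [sub_smul]; abel
      rwa [heq] at h1
    exact hS.closure_subset (closure_mono hsub (by rw [closure_Ioi]; exact self_mem_Ici))
  · intro h; exact sInf_le ⟨t, h, rfl⟩

theorem stmt_5 {Y : Type*} [AddCommGroup Y] [Module ℝ Y] [TopologicalSpace Y]
    [IsTopologicalAddGroup Y] [ContinuousSMul ℝ Y]
    (A : Set Y) (hAc : IsClosed A) (hAne : A.Nonempty) (hAp : A ≠ Set.univ)
    (k : Y) (hk : k ≠ 0) (hrec : ∀ a ∈ A, ∀ t : ℝ, 0 ≤ t → a - t • k ∈ A) :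
    List.TFAE
      [ ContinuousOn (phiF A k) {y | ∃ t : ℝ, y - t • k ∈ A} ∧
          IsOpen {y | ∃ t : ℝ, y - t • k ∈ A},
        ∀ a ∈ A, ∀ t : ℝ, 0 < t → a - t • k ∈ interior A,
        ∀ b ∈ frontier A, ∀ t : ℝ, 0 < t → b - t • k ∈ interior A,
        ∀ t : ℝ, {y | phiF A k y < (t : EReal)} = {y | y - t • k ∈ interior A},
        ∀ t : ℝ, {y | phiF A k y = (t : EReal)} = {y | y - t • k ∈ frontier A} ] := by
  have h24 : (∀ a ∈ A, ∀ t : ℝ, 0 < t → a - t • k ∈ interior A) →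
      ∀ t : ℝ, {y | phiF A k y < (t : EReal)} = {y | y - t • k ∈ interior A} := by
    intro h2 t
    ext y
    simp only [mem_setOf_eq]
    constructor
    · intro hy
      obtain ⟨s, hst, hs⟩ := phiF_lt.1 hy
      have hst' : s < t := by exact_mod_cast hst
      have h1 := h2 _ hs (t - s) (by linarith)
      have heq : y - s • k - (t - s) • k = y - t • k := by rw [sub_smul]; abel
      rwa [heq] at h1
    · intro hy
      have hU : IsOpen ((fun s : ℝ => y - s • k) ⁻¹' interior A) :=
        isOpen_interior.preimage (continuous_const.sub (continuous_id.smul continuous_const))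
      obtain ⟨ε, hε, hball⟩ := Metric.isOpen_iff.1 hU t hy
      have hs : (t - ε / 2) ∈ (fun s : ℝ => y - s • k) ⁻¹' interior A := by
        apply hball
        rw [Metric.mem_ball, Real.dist_eq]
        have h0 : t - ε / 2 - t = -(ε / 2) := by ring
        rw [h0, abs_neg, abs_of_pos (by linarith)]
        linarith
      have hsA : y - (t - ε / 2) • k ∈ A := interior_subset hs
      have hle : phiF A k y ≤ ((t - ε / 2 : ℝ) : EReal) :=
        sInf_le ⟨t - ε / 2, hsA, rfl⟩
      refine lt_of_le_of_lt hle ?_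
      exact_mod_cast (by linarith : t - ε / 2 < t)
  tfae_have 2 → 3 := by
    intro h2 b hb t ht
    exact h2 b (hAc.frontier_subset hb) t ht
  tfae_have 3 → 2 := by
    intro h3 a ha t ht
    by_cases hai : a ∈ interior A
    · have hU : IsOpen ((fun y => y + t • k) ⁻¹' interior A) :=
        isOpen_interior.preimage (continuous_id.add continuous_const)
      have hsub : (fun y => y + t • k) ⁻¹' interior A ⊆ A := by
        intro x hx
        have h1 := hrec _ (interior_subset hx) t ht.le
        simpa using h1
      have hmem : a - t • k ∈ (fun y => y + t • k) ⁻¹' interior A := by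
        simp only [mem_preimage, sub_add_cancel]; exact hai
      exact interior_maximal hsub hU hmem
    · exact h3 a (by rw [hAc.frontier_eq]; exact ⟨ha, hai⟩) t ht
  tfae_have 2 → 4 := h24
  tfae_have 4 → 5 := by
    intro h4 t
    ext y
    simp only [mem_setOf_eq, hAc.frontier_eq, mem_diff]
    constructor
    · intro he
      refine ⟨(phiF_le hAc hrec y t).1 he.le, fun hint => ?_⟩
      have hlt : phiF A k y < (t : EReal) := ((Set.ext_iff.1 (h4 t)) y).2 hint
      rw [he] at hlt
      exact lt_irrefl _ hlt
    · rintro ⟨hA, hni⟩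
      have hle : phiF A k y ≤ (t : EReal) := (phiF_le hAc hrec y t).2 hA
      have hnlt : ¬ phiF A k y < (t : EReal) := fun hlt => hni (((Set.ext_iff.1 (h4 t)) y).1 hlt)
      exact le_antisymm hle (not_lt.1 hnlt)
  tfae_have 5 → 2 := by
    intro h5 a ha t ht
    have hA : a - t • k ∈ A := hrec a ha t ht.le
    by_contra hni
    have hfr : a - t • k ∈ frontier A := by rw [hAc.frontier_eq]; exact ⟨hA, hni⟩
    have heq : phiF A k a = (t : EReal) := ((Set.ext_iff.1 (h5 t)) a).2 hfr
    have hle : phiF A k a ≤ ((0 : ℝ) : EReal) := (phiF_le hAc hrec a 0).2 (by simpa using ha)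
    rw [heq] at hle
    have : t ≤ 0 := by exact_mod_cast hle
    linarith
  tfae_have 1 → 2 := by
    rintro ⟨hcont, hopen⟩ a ha t ht
    have hD : a - t • k ∈ {y | ∃ s : ℝ, y - s • k ∈ A} := by
      refine ⟨-t, ?_⟩
      simpa [neg_smul, sub_neg_eq_add] using ha
    have hlt : phiF A k (a - t • k) < ((0 : ℝ) : EReal) := by
      refine phiF_lt.2 ⟨-t, by exact_mod_cast neg_lt_zero.mpr ht, ?_⟩
      simpa [neg_smul, sub_neg_eq_add] using ha
    have hca : ContinuousAt (phiF A k) (a - t • k) := hcont.continuousAt (hopen.mem_nhds hD)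
    have hnh : phiF A k ⁻¹' Iio ((0 : ℝ) : EReal) ∈ nhds (a - t • k) :=
      hca.preimage_mem_nhds (Iio_mem_nhds hlt)
    have hsub : phiF A k ⁻¹' Iio ((0 : ℝ) : EReal) ⊆ A := by
      intro y hy
      obtain ⟨s, hs0, hsA⟩ := phiF_lt.1 hy
      have hs0' : s < 0 := by exact_mod_cast hs0
      have h1 := hrec _ hsA (-s) (by linarith)
      simpa [neg_smul, sub_neg_eq_add] using h1
    exact mem_interior_iff_mem_nhds.2 (Filter.mem_of_superset hnh hsub)
  tfae_have 2 → 1 := by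
    intro h2
    have h4 := h24 h2
    constructor
    · apply Continuous.continuousOn
      rw [continuous_iff_continuousAt]
      intro y
      rw [ContinuousAt, tendsto_order]
      constructor
      · intro b hb
        obtain ⟨r, hbr, hr⟩ := EReal.exists_between_coe_real hb
        have hseq : {x : Y | (r : EReal) < phiF A k x} = {x : Y | x - r • k ∈ A}ᶜ := by
          ext x
          simp only [mem_setOf_eq, mem_compl_iff, ← phiF_le hAc hrec x r, not_le]
        have hopen' : IsOpen {x : Y | (r : EReal) < phiF A k x} := by
          rw [hseq]
          exact (hAc.preimage (continuous_id.sub continuous_const)).isOpen_compl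
        exact Filter.eventually_of_mem (hopen'.mem_nhds hr) fun x hx => hbr.trans hx
      · intro b hb
        obtain ⟨r, hr, hrb⟩ := EReal.exists_between_coe_real hb
        have hopen' : IsOpen {x : Y | phiF A k x < (r : EReal)} := by
          rw [h4 r]
          exact isOpen_interior.preimage (continuous_id.sub continuous_const)
        exact Filter.eventually_of_mem (hopen'.mem_nhds hr) fun x hx => hx.trans hrb
    · have hDeq : {y : Y | ∃ t : ℝ, y - t • k ∈ A} =
          ⋃ t : ℝ, (fun y => y - t • k) ⁻¹' interior A := by
        ext y
        simp only [mem_iUnion, mem_preimage, mem_setOf_eq]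
        constructor
        · rintro ⟨t, htA⟩
          refine ⟨t + 1, ?_⟩
          have h1 := h2 _ htA 1 one_pos
          have heq : y - t • k - (1 : ℝ) • k = y - (t + 1) • k := by
            rw [add_smul, one_smul]; abel
          rwa [heq] at h1
        · rintro ⟨t, htA⟩; exact ⟨t, interior_subset htA⟩
      rw [hDeq]
      exact isOpen_iUnion fun t =>
        isOpen_interior.preimage (continuous_id.sub continuous_const)
  tfae_finish
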